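/- For all ω, λ ∈ ℂ and every smooth compactly supported f = (f₁,f₂) : (0,∞) → ℂ², the imaginary part of the quadratic form of the Dirac–Coulomb operator is Im ∫₀^∞ f(x)* (D_{ω,λ}f)(x) dx = −Im(λ+ω) ∫₀^∞ |f₁(x)|²/x dx − Im(λ−ω) ∫₀^∞ |f₂(x)|²/x dx, where f(x)* v = conj(f₁(x))v₁ + conj(f₂(x))v₂ is the Hermitian pairing. -/

import Mathlib

open MeasureTheory

/-- The formal 1-dimensional Dirac-Coulomb operator `D_{ω,λ}`. -/
noncomputable def diracCoulomb (ω lam : ℂ) (f : ℝ → ℂ × ℂ) : ℝ → ℂ × ℂ :=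
  fun x =>
    (-((lam + ω) / (x : ℂ)) * (f x).1 - deriv (fun y => (f y).2) x,
     deriv (fun y => (f y).1) x - ((lam - ω) / (x : ℂ)) * (f x).2)

open Complex Filter in
/-- Auxiliary continuity lemma: `c/x * h x` is continuous when `h` is continuous and supported
away from `0`. -/
lemma diracCoulomb_aux_cont (c : ℂ) {h : ℝ → ℂ} (hh : Continuous h)
    (hs : tsupport h ⊆ Set.Ioi 0) :
    Continuous fun x : ℝ => c / (x : ℂ) * h x := by
  rw [continuous_iff_continuousAt]
  intro x
  by_cases hx : x ∈ tsupport h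
  · have hx0 : (x : ℝ) ≠ 0 := ne_of_gt (hs hx)
    exact (continuousAt_const.div (Complex.continuous_ofReal.continuousAt)
      (by exact_mod_cast hx0)).mul hh.continuousAt
  · have h0 : h =ᶠ[nhds x] 0 := notMem_tsupport_iff_eventuallyEq.mp hx
    have heq : (fun y : ℝ => c / (y : ℂ) * h y) =ᶠ[nhds x] fun _ => 0 :=
      h0.mono fun y hy => by simp [show h y = 0 from hy]
    exact continuousAt_const.congr heq.symm

/-- The imaginary part of the quadratic form of the Dirac-Coulomb operator on a smooth
compactly supported test function. -/
theorem diracCoulomb_im_quadratic_form (ω lam : ℂ) (f : ℝ → ℂ × ℂ)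
    (hf : ContDiff ℝ (⊤ : ℕ∞) f) (hfc : HasCompactSupport f)
    (hfs : tsupport f ⊆ Set.Ioi 0) :
    (∫ x in Set.Ioi (0 : ℝ),
        ((starRingEnd ℂ) (f x).1 * (diracCoulomb ω lam f x).1 +
          (starRingEnd ℂ) (f x).2 * (diracCoulomb ω lam f x).2)).im =
      -(lam + ω).im * (∫ x in Set.Ioi (0 : ℝ), ‖(f x).1‖ ^ 2 / x) -
        (lam - ω).im * (∫ x in Set.Ioi (0 : ℝ), ‖(f x).2‖ ^ 2 / x) := by
  set c := lam + ω with hc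
  set d := lam - ω with hd
  set f₁ : ℝ → ℂ := fun x => (f x).1 with hf₁def
  set f₂ : ℝ → ℂ := fun x => (f x).2 with hf₂def
  -- basic vanishing
  have hz : ∀ x ∉ Set.Ioi (0 : ℝ), f x = 0 := fun x hx =>
    image_eq_zero_of_notMem_tsupport fun h => hx (hfs h)
  have hz1 : ∀ x : ℝ, f x = 0 → f₁ x = 0 := fun x hx => by simp [hf₁def, hx]
  have hz2 : ∀ x : ℝ, f x = 0 → f₂ x = 0 := fun x hx => by simp [hf₂def, hx]
  -- smoothness of components
  have hf1 : ContDiff ℝ (⊤ : ℕ∞) f₁ := contDiff_fst.comp hf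
  have hf2 : ContDiff ℝ (⊤ : ℕ∞) f₂ := contDiff_snd.comp hf
  have hd1 : ∀ x, HasDerivAt f₁ (deriv f₁ x) x := fun x =>
    ((hf1.differentiable (by simp)) x).hasDerivAt
  have hd2 : ∀ x, HasDerivAt f₂ (deriv f₂ x) x := fun x =>
    ((hf2.differentiable (by simp)) x).hasDerivAt
  have hcd1 : Continuous (deriv f₁) := hf1.continuous_deriv (by exact_mod_cast le_top)
  have hcd2 : Continuous (deriv f₂) := hf2.continuous_deriv (by exact_mod_cast le_top)
  -- generic integrability from continuity + support inside that of f
  have key_int : ∀ g : ℝ → ℂ, Continuous g → (∀ x, f x = 0 → g x = 0) → Integrable g := by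
    intro g hg hgz
    refine hg.integrable_of_hasCompactSupport (hfc.mono fun x hx => ?_)
    intro hfx
    exact hx (hgz x hfx)
  -- the three pieces of the integrand
  set t1 : ℝ → ℂ := fun x => -c / (x : ℂ) * ((‖f₁ x‖ ^ 2 : ℝ) : ℂ) with ht1def
  set t2 : ℝ → ℂ := fun x => -d / (x : ℂ) * ((‖f₂ x‖ ^ 2 : ℝ) : ℂ) with ht2def
  set t3 : ℝ → ℂ := fun x =>
    (starRingEnd ℂ) (f₂ x) * deriv f₁ x - (starRingEnd ℂ) (f₁ x) * deriv f₂ x with ht3def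
  -- pointwise decomposition of the integrand
  have hpt : ∀ x : ℝ,
      (starRingEnd ℂ) (f x).1 * (diracCoulomb ω lam f x).1 +
        (starRingEnd ℂ) (f x).2 * (diracCoulomb ω lam f x).2 = t1 x + t2 x + t3 x := by
    intro x
    have h1 : (starRingEnd ℂ) (f₁ x) * f₁ x = ((‖f₁ x‖ ^ 2 : ℝ) : ℂ) := by
      simpa using RCLike.conj_mul (f₁ x)
    have h2 : (starRingEnd ℂ) (f₂ x) * f₂ x = ((‖f₂ x‖ ^ 2 : ℝ) : ℂ) := by
      simpa using RCLike.conj_mul (f₂ x)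
    simp only [diracCoulomb, ht1def, ht2def, ht3def, ← hc, ← hd, ← hf₁def, ← hf₂def]
    rw [← h1, ← h2]
    ring
  -- supports of the pieces
  have ht1z : ∀ x, f x = 0 → t1 x = 0 := fun x hx => by simp [ht1def, hz1 x hx]
  have ht2z : ∀ x, f x = 0 → t2 x = 0 := fun x hx => by simp [ht2def, hz2 x hx]
  have ht3z : ∀ x, f x = 0 → t3 x = 0 := fun x hx => by simp [ht3def, hz1 x hx, hz2 x hx]
  -- continuity of the pieces
  have hts1 : tsupport (fun x : ℝ => ((‖f₁ x‖ ^ 2 : ℝ) : ℂ)) ⊆ Set.Ioi 0 := by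
    refine subset_trans (closure_mono fun x hx => ?_) hfs
    by_contra hxf
    have hf0 : f x = 0 := Function.notMem_support.mp hxf
    exact hx (by simp [hz1 x hf0])
  have hts2 : tsupport (fun x : ℝ => ((‖f₂ x‖ ^ 2 : ℝ) : ℂ)) ⊆ Set.Ioi 0 := by
    refine subset_trans (closure_mono fun x hx => ?_) hfs
    by_contra hxf
    have hf0 : f x = 0 := Function.notMem_support.mp hxf
    exact hx (by simp [hz2 x hf0])
  have hcont1 : Continuous t1 :=
    diracCoulomb_aux_cont (-c)
      (Complex.continuous_ofReal.comp ((hf1.continuous.norm.pow 2))) hts1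
  have hcont2 : Continuous t2 :=
    diracCoulomb_aux_cont (-d)
      (Complex.continuous_ofReal.comp ((hf2.continuous.norm.pow 2))) hts2
  have hcont3 : Continuous t3 :=
    ((Complex.continuous_conj.comp hf2.continuous).mul hcd1).sub
      ((Complex.continuous_conj.comp hf1.continuous).mul hcd2)
  -- integrability of the pieces
  have hi1 : Integrable t1 := key_int t1 hcont1 ht1z
  have hi2 : Integrable t2 := key_int t2 hcont2 ht2z
  have hi3 : Integrable t3 := key_int t3 hcont3 ht3z
  -- move everything to integrals over ℝ
  have hIoi : ∀ g : ℝ → ℂ, (∀ x, f x = 0 → g x = 0) →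
      ∫ x in Set.Ioi (0 : ℝ), g x = ∫ x, g x := by
    intro g hgz
    exact setIntegral_eq_integral_of_forall_compl_eq_zero fun x hx => hgz x (hz x hx)
  have hsplit : (∫ x in Set.Ioi (0 : ℝ),
      ((starRingEnd ℂ) (f x).1 * (diracCoulomb ω lam f x).1 +
        (starRingEnd ℂ) (f x).2 * (diracCoulomb ω lam f x).2)) =
      (∫ x, t1 x) + (∫ x, t2 x) + (∫ x, t3 x) := by
    rw [show (fun x => (starRingEnd ℂ) (f x).1 * (diracCoulomb ω lam f x).1 +
        (starRingEnd ℂ) (f x).2 * (diracCoulomb ω lam f x).2) =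
        fun x => t1 x + t2 x + t3 x from funext hpt]
    rw [hIoi _ (fun x hx => by simp [ht1z x hx, ht2z x hx, ht3z x hx])]
    have hadd : Integrable (fun x => t1 x + t2 x) := hi1.add hi2
    rw [integral_add hadd hi3, integral_add hi1 hi2]
  -- the Coulomb pieces
  have hr1 : (∫ x, t1 x) = -c * ((∫ x in Set.Ioi (0 : ℝ), ‖(f x).1‖ ^ 2 / x : ℝ) : ℂ) := by
    have heq : ∀ x : ℝ, t1 x = -c * ((‖f₁ x‖ ^ 2 / x : ℝ) : ℂ) := by
      intro x; simp only [ht1def]; push_cast; ring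
    rw [show (fun x => t1 x) = fun x => -c * ((‖f₁ x‖ ^ 2 / x : ℝ) : ℂ) from funext heq,
      integral_const_mul,
      setIntegral_eq_integral_of_forall_compl_eq_zero
        (s := Set.Ioi (0 : ℝ)) (f := fun x => (‖f₁ x‖ ^ 2 / x : ℝ))
        (fun x hx => by simp [hz1 x (hz x hx)])]
    congr 1
    exact integral_ofReal
  have hr2 : (∫ x, t2 x) = -d * ((∫ x in Set.Ioi (0 : ℝ), ‖(f x).2‖ ^ 2 / x : ℝ) : ℂ) := by
    have heq : ∀ x : ℝ, t2 x = -d * ((‖f₂ x‖ ^ 2 / x : ℝ) : ℂ) := by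
      intro x; simp only [ht2def]; push_cast; ring
    rw [show (fun x => t2 x) = fun x => -d * ((‖f₂ x‖ ^ 2 / x : ℝ) : ℂ) from funext heq,
      integral_const_mul,
      setIntegral_eq_integral_of_forall_compl_eq_zero
        (s := Set.Ioi (0 : ℝ)) (f := fun x => (‖f₂ x‖ ^ 2 / x : ℝ))
        (fun x hx => by simp [hz2 x (hz x hx)])]
    congr 1
    exact integral_ofReal
  -- the cross term: imaginary part vanishes by integration by parts
  have hcross : (∫ x, t3 x).im = 0 := by
    set z : ℂ := ∫ x, (starRingEnd ℂ) (deriv f₁ x) * f₂ x with hzdef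
    -- integration by parts: ∫ conj f₁ * f₂' = - z
    have hu : ∀ x, HasDerivAt (fun y => (starRingEnd ℂ) (f₁ y))
        ((starRingEnd ℂ) (deriv f₁ x)) x := fun x => (hd1 x).star
    have hA : (∫ x, (starRingEnd ℂ) (f₁ x) * deriv f₂ x) = -z := by
      rw [hzdef]
      exact integral_mul_deriv_eq_deriv_mul_of_integrable (fun x _ => hu x) (fun x _ => hd2 x)
        (key_int _ ((Complex.continuous_conj.comp hf1.continuous).mul hcd2)
          (fun x hx => by simp [hz1 x hx]))
        (key_int _ ((Complex.continuous_conj.comp (hcd1)).mul hf2.continuous)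
          (fun x hx => by simp [hz2 x hx]))
        (key_int _ ((Complex.continuous_conj.comp hf1.continuous).mul hf2.continuous)
          (fun x hx => by simp [hz1 x hx]))
    have hB : (∫ x, (starRingEnd ℂ) (f₂ x) * deriv f₁ x) = (starRingEnd ℂ) z := by
      rw [hzdef, ← integral_conj]
      congr 1
      funext x
      simp only [map_mul, RingHomCompTriple.comp_apply, Complex.conj_conj, RingHom.id_apply]
      ring
    have : (∫ x, t3 x) = (starRingEnd ℂ) z + z := by
      rw [ht3def]
      rw [integral_sub
        (key_int (fun x => (starRingEnd ℂ) (f₂ x) * deriv f₁ x)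
          ((Complex.continuous_conj.comp hf2.continuous).mul hcd1)
          (fun x hx => by simp [hz2 x hx]))
        (key_int (fun x => (starRingEnd ℂ) (f₁ x) * deriv f₂ x)
          ((Complex.continuous_conj.comp hf1.continuous).mul hcd2)
          (fun x hx => by simp [hz1 x hx])), hA, hB]
      ring
    rw [this]
    simp [Complex.add_im, Complex.conj_im]
  -- put everything together
  rw [hsplit]
  simp only [Complex.add_im, hr1, hr2, hcross, Complex.mul_im, Complex.ofReal_re,
    Complex.ofReal_im, Complex.neg_re, Complex.neg_im]
  ring
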